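/- Any continuous bounded prior density u on the simplex Δ^{m−1} is the pointwise limit of finite mixtures of Dirichlet densities: Σ_{x: Σx_i=n} b_{x,n} · D(p | x_1+1, …, x_m+1) → u(p) as n → ∞, where b_{x,n} are nonnegative weights summing to 1 proportional to u(x/n). -/

import Mathlib

open Finset MeasureTheory Nat

/-- The Dirichlet density with parameter vector `α` at the point `p`:
`D(p | α) = Γ(∑ α) / ∏ Γ(α i) · ∏ p i ^ (α i - 1)`. -/
noncomputable def dirichletPDF {m : ℕ} (α : Fin m → ℝ) (p : Fin m → ℝ) : ℝ :=
  (Real.Gamma (∑ i, α i) / ∏ i, Real.Gamma (α i)) * ∏ i, p i ^ (α i - 1)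

lemma DM.key_mult (m n : ℕ) (i : Fin m) (z : Fin m → ℕ) (hz : ∑ j, z j = n) :
    (z i + 1) * Nat.multinomial univ (z + (Pi.single i 1 : Fin m → ℕ)) = (n + 1) * Nat.multinomial univ z := by
  have hupd : z + (Pi.single i 1 : Fin m → ℕ) = Function.update z i (z i + 1) := by
    funext j; by_cases h : j = i <;> simp [h, Function.update, Pi.single]
  have hprodpos : 0 < ∏ j, (z j)! := Finset.prod_pos fun j _ => Nat.factorial_pos _
  refine Nat.eq_of_mul_eq_mul_right hprodpos ?_
  have h1 : ∏ j, ((z + (Pi.single i 1 : Fin m → ℕ)) j)! = (z i + 1) * ∏ j, (z j)! := by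
    rw [hupd]
    rw [← Finset.mul_prod_erase univ (fun j => (Function.update z i (z i + 1) j)!) (mem_univ i),
        ← Finset.mul_prod_erase univ (fun j => (z j)!) (mem_univ i)]
    rw [Function.update_self, Nat.factorial_succ]
    rw [Finset.prod_congr rfl fun j hj => by rw [Function.update_of_ne (Finset.ne_of_mem_erase hj)]]
    ring
  have h2 : ∑ j, (z + (Pi.single i 1 : Fin m → ℕ)) j = n + 1 := by
    simp [Finset.sum_add_distrib, hz]
  calc (z i + 1) * Nat.multinomial univ (z + (Pi.single i 1 : Fin m → ℕ)) * ∏ j, (z j)!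
      = Nat.multinomial univ (z + (Pi.single i 1 : Fin m → ℕ)) * ((z i + 1) * ∏ j, (z j)!) := by ring
    _ = Nat.multinomial univ (z + (Pi.single i 1 : Fin m → ℕ)) * ∏ j, ((z + (Pi.single i 1 : Fin m → ℕ)) j)! := by rw [h1]
    _ = (n + 1)! := by rw [mul_comm, Nat.multinomial_spec, h2]
    _ = (n + 1) * n ! := Nat.factorial_succ n
    _ = (n + 1) * Nat.multinomial univ z * ∏ j, (z j)! := by
        rw [mul_assoc, ← hz, mul_comm (Nat.multinomial univ z), Nat.multinomial_spec]

lemma DM.shift (m n : ℕ) (i : Fin m) (q : Fin m → ℝ) (w : ℕ → ℝ) :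
    ∑ x ∈ Finset.Nat.antidiagonalTuple m (n+1),
        (x i : ℝ) * w (x i - 1) * (Nat.multinomial univ x : ℝ) * ∏ j, q j ^ x j
      = (n+1) * q i *
        ∑ z ∈ Finset.Nat.antidiagonalTuple m n,
          w (z i) * (Nat.multinomial univ z : ℝ) * ∏ j, q j ^ z j := by
  have hinj : Function.Injective (fun z : Fin m → ℕ => z + (Pi.single i 1 : Fin m → ℕ)) :=
    fun a b h => by simpa using add_left_injective (Pi.single i 1 : Fin m → ℕ) h
  set e : (Fin m → ℕ) ↪ (Fin m → ℕ) := ⟨fun z => z + (Pi.single i 1 : Fin m → ℕ), hinj⟩ with he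
  have hsum_e : ∀ z : Fin m → ℕ, ∑ j, (z + (Pi.single i 1 : Fin m → ℕ)) j = (∑ j, z j) + 1 := by
    intro z; simp [Finset.sum_add_distrib]
  have hsub : (Finset.Nat.antidiagonalTuple m n).map e ⊆ Finset.Nat.antidiagonalTuple m (n+1) := by
    intro x hx
    rcases Finset.mem_map.mp hx with ⟨z, hz, rfl⟩
    rw [Finset.Nat.mem_antidiagonalTuple] at hz ⊢
    have h2 := hsum_e z
    rw [hz] at h2
    exact h2
  rw [← Finset.sum_subset hsub ?_]
  · rw [Finset.sum_map]
    rw [Finset.mul_sum]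
    refine Finset.sum_congr rfl fun z hz => ?_
    rw [Finset.Nat.mem_antidiagonalTuple] at hz
    have hei : (e z) i = z i + 1 := by simp [he]
    have hkey := DM.key_mult m n i z hz
    have hkeyR : ((z i : ℝ) + 1) * (Nat.multinomial univ (z + (Pi.single i 1 : Fin m → ℕ)) : ℝ)
        = ((n : ℝ) + 1) * (Nat.multinomial univ z : ℝ) := by
      exact_mod_cast congrArg (fun t : ℕ => (t : ℝ)) hkey
    have hprod : ∏ j, q j ^ (z + (Pi.single i 1 : Fin m → ℕ)) j = (∏ j, q j ^ z j) * q i := by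
      have hstep : ∀ j, q j ^ (z + (Pi.single i 1 : Fin m → ℕ)) j
          = q j ^ z j * q j ^ ((Pi.single i 1 : Fin m → ℕ) j) := by
        intro j; rw [Pi.add_apply, pow_add]
      rw [Finset.prod_congr rfl fun j _ => hstep j, Finset.prod_mul_distrib]
      congr 1
      rw [Finset.prod_eq_single i (fun j _ hj => by simp [Pi.single_eq_of_ne hj]) (by simp)]
      simp
    show ((e z) i : ℝ) * w ((e z) i - 1) * (Nat.multinomial univ (e z) : ℝ) * ∏ j, q j ^ (e z) j
        = (n+1) * q i * (w (z i) * (Nat.multinomial univ z : ℝ) * ∏ j, q j ^ z j)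
    have heza : e z = z + (Pi.single i 1 : Fin m → ℕ) := rfl
    rw [hei, heza, hprod, Nat.add_sub_cancel]
    push_cast
    linear_combination (w (z i) * (∏ j, q j ^ z j) * q i) * hkeyR
  · intro x hx hxn
    rw [Finset.Nat.mem_antidiagonalTuple] at hx
    have hxi : x i = 0 := by
      by_contra h
      apply hxn
      refine Finset.mem_map.mpr ⟨x - (Pi.single i 1 : Fin m → ℕ), ?_, ?_⟩
      · rw [Finset.Nat.mem_antidiagonalTuple]
        have hex : (x - (Pi.single i 1 : Fin m → ℕ)) + (Pi.single i 1 : Fin m → ℕ) = x := by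
          funext j; by_cases hj : j = i
          · subst hj; simp [Nat.sub_add_cancel (Nat.one_le_iff_ne_zero.mpr h)]
          · simp [Pi.single_eq_of_ne hj]
        have h2 := hsum_e (x - (Pi.single i 1 : Fin m → ℕ))
        rw [hex, hx] at h2
        omega
      · show (x - (Pi.single i 1 : Fin m → ℕ)) + (Pi.single i 1 : Fin m → ℕ) = x
        funext j; by_cases hj : j = i
        · subst hj; simp [Nat.sub_add_cancel (Nat.one_le_iff_ne_zero.mpr h)]
        · simp [Pi.single_eq_of_ne hj]
    simp [hxi]

lemma DM.sum_M (m n : ℕ) (q : Fin m → ℝ) (hq : ∑ i, q i = 1) :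
    ∑ x ∈ Finset.Nat.antidiagonalTuple m n, (Nat.multinomial univ x : ℝ) * ∏ i, q i ^ x i = 1 := by
  rw [← Finset.piAntidiag_univ_fin_eq_antidiagonalTuple]
  rw [← Finset.sum_pow_eq_sum_piAntidiag univ q n, hq, one_pow]

lemma DM.moment1 (m n : ℕ) (i : Fin m) (q : Fin m → ℝ) (hq : ∑ i, q i = 1) :
    ∑ x ∈ Finset.Nat.antidiagonalTuple m n,
      (x i : ℝ) * ((Nat.multinomial univ x : ℝ) * ∏ j, q j ^ x j) = n * q i := by
  cases n with
  | zero => simp [Finset.Nat.antidiagonalTuple_zero_right]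
  | succ n =>
    have h := DM.shift m n i q (fun _ => 1)
    simp only [mul_one] at h
    calc ∑ x ∈ Finset.Nat.antidiagonalTuple m (n+1),
          (x i : ℝ) * ((Nat.multinomial univ x : ℝ) * ∏ j, q j ^ x j)
        = ∑ x ∈ Finset.Nat.antidiagonalTuple m (n+1),
          (x i : ℝ) * 1 * (Nat.multinomial univ x : ℝ) * ∏ j, q j ^ x j := by
          refine Finset.sum_congr rfl fun x _ => by ring
      _ = (n+1) * q i * ∑ z ∈ Finset.Nat.antidiagonalTuple m n,
            1 * (Nat.multinomial univ z : ℝ) * ∏ j, q j ^ z j := DM.shift m n i q (fun _ => 1)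
      _ = (n+1) * q i * ∑ z ∈ Finset.Nat.antidiagonalTuple m n,
            (Nat.multinomial univ z : ℝ) * ∏ j, q j ^ z j := by
          simp only [one_mul]
      _ = (n+1 : ℕ) * q i := by rw [DM.sum_M m n q hq]; push_cast; ring

lemma DM.moment2 (m n : ℕ) (i : Fin m) (q : Fin m → ℝ) (hq : ∑ i, q i = 1) :
    ∑ x ∈ Finset.Nat.antidiagonalTuple m n,
      (x i : ℝ) * ((x i - 1 : ℕ) : ℝ) * ((Nat.multinomial univ x : ℝ) * ∏ j, q j ^ x j)
      = (n : ℝ) * ((n : ℝ) - 1) * q i ^ 2 := by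
  cases n with
  | zero => simp [Finset.Nat.antidiagonalTuple_zero_right]
  | succ n =>
    calc ∑ x ∈ Finset.Nat.antidiagonalTuple m (n+1),
          (x i : ℝ) * ((x i - 1 : ℕ) : ℝ) * ((Nat.multinomial univ x : ℝ) * ∏ j, q j ^ x j)
        = ∑ x ∈ Finset.Nat.antidiagonalTuple m (n+1),
          (x i : ℝ) * (fun a : ℕ => (a : ℝ)) (x i - 1) * (Nat.multinomial univ x : ℝ) * ∏ j, q j ^ x j := by
          refine Finset.sum_congr rfl fun x _ => by ring
      _ = (n+1) * q i * ∑ z ∈ Finset.Nat.antidiagonalTuple m n,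
            (z i : ℝ) * (Nat.multinomial univ z : ℝ) * ∏ j, q j ^ z j :=
          DM.shift m n i q (fun a : ℕ => (a : ℝ))
      _ = (n+1) * q i * ∑ z ∈ Finset.Nat.antidiagonalTuple m n,
            (z i : ℝ) * ((Nat.multinomial univ z : ℝ) * ∏ j, q j ^ z j) := by
          congr 1
          exact Finset.sum_congr rfl fun z _ => by ring
      _ = (n+1) * q i * (n * q i) := by rw [DM.moment1 m n i q hq]
      _ = ((n+1 : ℕ) : ℝ) * (((n+1 : ℕ) : ℝ) - 1) * q i ^ 2 := by push_cast; ring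

lemma DM.cast_pred (a : ℕ) : (a : ℝ) * ((a - 1 : ℕ) : ℝ) = (a : ℝ)^2 - (a : ℝ) := by
  cases a with
  | zero => simp
  | succ a => push_cast [Nat.succ_sub_one]; ring

lemma DM.variance (m n : ℕ) (i : Fin m) (q : Fin m → ℝ) (hq : ∑ i, q i = 1) :
    ∑ x ∈ Finset.Nat.antidiagonalTuple m n,
      ((Nat.multinomial univ x : ℝ) * ∏ j, q j ^ x j) * ((x i : ℝ) - n * q i)^2
      = n * q i * (1 - q i) := by
  have hexp : ∀ x : Fin m → ℕ,
      ((Nat.multinomial univ x : ℝ) * ∏ j, q j ^ x j) * ((x i : ℝ) - n * q i)^2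
      = (x i : ℝ) * ((x i - 1 : ℕ) : ℝ) * ((Nat.multinomial univ x : ℝ) * ∏ j, q j ^ x j)
        + (1 - 2 * n * q i) * ((x i : ℝ) * ((Nat.multinomial univ x : ℝ) * ∏ j, q j ^ x j))
        + ((n : ℝ) * q i)^2 * ((Nat.multinomial univ x : ℝ) * ∏ j, q j ^ x j) := by
    intro x
    have h := DM.cast_pred (x i)
    linear_combination (-((Nat.multinomial univ x : ℝ) * ∏ j, q j ^ x j)) * h
  rw [Finset.sum_congr rfl fun x _ => hexp x]
  rw [Finset.sum_add_distrib, Finset.sum_add_distrib, ← Finset.mul_sum, ← Finset.mul_sum]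
  rw [DM.moment1 m n i q hq, DM.moment2 m n i q hq, DM.sum_M m n q hq]
  ring

lemma DM.bernstein (k : ℕ) (u : (Fin (k+1) → ℝ) → ℝ)
    (hu : ContinuousOn u (stdSimplex ℝ (Fin (k+1))))
    (C : ℝ) (hC : ∀ p ∈ stdSimplex ℝ (Fin (k+1)), |u p| ≤ C)
    (q : Fin (k+1) → ℝ) (hq : q ∈ stdSimplex ℝ (Fin (k+1))) :
    Filter.Tendsto (fun n : ℕ => ∑ x ∈ Finset.Nat.antidiagonalTuple (k+1) n,
      u (fun i => (x i : ℝ)/n) * ((Nat.multinomial univ x : ℝ) * ∏ j, q j ^ x j))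
      Filter.atTop (nhds (u q)) := by
  obtain ⟨hq0, hq1⟩ := hq
  have hM0 : ∀ x : Fin (k+1) → ℕ, 0 ≤ (Nat.multinomial univ x : ℝ) * ∏ j, q j ^ x j := by
    intro x
    have : 0 ≤ ∏ j, q j ^ x j := Finset.prod_nonneg fun j _ => pow_nonneg (hq0 j) _
    positivity
  have hCnn : 0 ≤ C := le_trans (abs_nonneg _) (hC q ⟨hq0, hq1⟩)
  rw [Metric.tendsto_atTop]
  intro ε hε
  have hcw : ContinuousWithinAt u (stdSimplex ℝ (Fin (k+1))) q := hu q ⟨hq0, hq1⟩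
  obtain ⟨δ, hδ, hδ'⟩ := Metric.continuousWithinAt_iff.mp hcw (ε/2) (by linarith)
  set B : ℝ := 2*C/δ^2 with hB
  have hBnn : 0 ≤ B := by positivity
  obtain ⟨N₀, hN₀⟩ := exists_nat_gt (B / (ε/4))
  have hN₀pos : 0 < N₀ := by
    rcases Nat.eq_zero_or_pos N₀ with h | h
    · exfalso
      have hnn : (0:ℝ) ≤ B / (ε/4) := by positivity
      rw [h] at hN₀
      simp at hN₀
      linarith
    · exact h
  refine ⟨N₀, fun n hn => ?_⟩
  have hn1 : 1 ≤ n := le_trans hN₀pos hn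
  have hnR : (0:ℝ) < n := by exact_mod_cast hn1
  have hnne : (n:ℝ) ≠ 0 := ne_of_gt hnR
  set M : (Fin (k+1) → ℕ) → ℝ := fun x => (Nat.multinomial univ x : ℝ) * ∏ j, q j ^ x j with hM
  set xn : (Fin (k+1) → ℕ) → (Fin (k+1) → ℝ) := fun x i => (x i : ℝ)/n with hxn
  have hS : ∑ x ∈ Finset.Nat.antidiagonalTuple (k+1) n, M x = 1 := DM.sum_M (k+1) n q hq1
  have hmem : ∀ x ∈ Finset.Nat.antidiagonalTuple (k+1) n, xn x ∈ stdSimplex ℝ (Fin (k+1)) := by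
    intro x hx
    rw [Finset.Nat.mem_antidiagonalTuple] at hx
    constructor
    · intro i; exact div_nonneg (Nat.cast_nonneg _) (le_of_lt hnR)
    · rw [← Finset.sum_div]
      rw [show ∑ i, ((x i : ℕ) : ℝ) = ((∑ i, x i : ℕ) : ℝ) by push_cast; rfl, hx]
      exact div_self hnne
  -- variance sum bound
  have hV : ∑ x ∈ Finset.Nat.antidiagonalTuple (k+1) n, M x * (∑ i, (xn x i - q i)^2) ≤ 1/n := by
    have hswap : ∑ x ∈ Finset.Nat.antidiagonalTuple (k+1) n, M x * (∑ i, (xn x i - q i)^2)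
        = ∑ i, ∑ x ∈ Finset.Nat.antidiagonalTuple (k+1) n, M x * (xn x i - q i)^2 := by
      rw [Finset.sum_comm]
      exact Finset.sum_congr rfl fun x _ => Finset.mul_sum _ _ _
    rw [hswap]
    have hper : ∀ i : Fin (k+1), ∑ x ∈ Finset.Nat.antidiagonalTuple (k+1) n, M x * (xn x i - q i)^2 ≤ q i / n := by
      intro i
      have heq : ∀ x : Fin (k+1) → ℕ, M x * (xn x i - q i)^2 = (1/(n:ℝ)^2) * (M x * ((x i : ℝ) - n * q i)^2) := by
        intro x; rw [hxn]; field_simp; try ring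
      rw [Finset.sum_congr rfl fun x _ => heq x, ← Finset.mul_sum,
        DM.variance (k+1) n i q hq1]
      have h1 : (n:ℝ) * q i * (1 - q i) ≤ (n:ℝ) * q i := by nlinarith [hq0 i, sq_nonneg (q i)]
      calc (1/(n:ℝ)^2) * ((n:ℝ) * q i * (1 - q i)) ≤ (1/(n:ℝ)^2) * ((n:ℝ) * q i) := by
            apply mul_le_mul_of_nonneg_left h1; positivity
        _ = q i / n := by field_simp
    calc ∑ i, ∑ x ∈ Finset.Nat.antidiagonalTuple (k+1) n, M x * (xn x i - q i)^2
        ≤ ∑ i, q i / n := Finset.sum_le_sum fun i _ => hper i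
      _ = 1/n := by rw [← Finset.sum_div, hq1]
  -- termwise bound
  have hterm : ∀ x ∈ Finset.Nat.antidiagonalTuple (k+1) n,
      |(u (xn x) - u q) * M x| ≤ ε/2 * M x + B * (M x * ∑ i, (xn x i - q i)^2) := by
    intro x hx
    have hMx : 0 ≤ M x := hM0 x
    have hsq : 0 ≤ ∑ i, (xn x i - q i)^2 := Finset.sum_nonneg fun i _ => sq_nonneg _
    rw [abs_mul, abs_of_nonneg hMx]
    by_cases hd : dist (xn x) q < δ
    · have h1 : |u (xn x) - u q| ≤ ε/2 := by
        have := hδ' (hmem x hx) hd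
        rw [Real.dist_eq] at this
        linarith
      have : |u (xn x) - u q| * M x ≤ ε/2 * M x := mul_le_mul_of_nonneg_right h1 hMx
      have hpos : 0 ≤ B * (M x * ∑ i, (xn x i - q i)^2) := by positivity
      linarith
    · have h2 : |u (xn x) - u q| ≤ 2*C := by
        have ha := hC (xn x) (hmem x hx)
        have hb := hC q ⟨hq0, hq1⟩
        calc |u (xn x) - u q| ≤ |u (xn x)| + |u q| := abs_sub _ _
          _ ≤ 2*C := by linarith
      have h3 : δ^2 ≤ ∑ i, (xn x i - q i)^2 := by
        push_neg at hd
        obtain ⟨i, hi⟩ : ∃ i, δ ≤ dist (xn x i) (q i) := by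
          by_contra hcon
          push_neg at hcon
          exact absurd ((dist_pi_lt_iff hδ).mpr fun i => hcon i) (not_lt.mpr hd)
        have hstep : δ^2 ≤ (xn x i - q i)^2 := by
          rw [Real.dist_eq] at hi
          calc δ^2 ≤ |xn x i - q i|^2 := pow_le_pow_left₀ hδ.le hi 2
            _ = (xn x i - q i)^2 := sq_abs _
        calc δ^2 ≤ (xn x i - q i)^2 := hstep
          _ ≤ ∑ j, (xn x j - q j)^2 :=
            Finset.single_le_sum (f := fun j => (xn x j - q j)^2) (fun j _ => sq_nonneg _) (mem_univ i)
      have key : 2*C*M x ≤ B * (M x * ∑ i, (xn x i - q i)^2) := by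
        have hBδ : B * (M x * δ^2) = 2*C*M x := by
          rw [hB]; field_simp; try ring
        rw [← hBδ]
        apply mul_le_mul_of_nonneg_left _ hBnn
        exact mul_le_mul_of_nonneg_left h3 hMx
      have : |u (xn x) - u q| * M x ≤ 2*C*M x := mul_le_mul_of_nonneg_right h2 hMx
      have hεM : 0 ≤ ε/2 * M x := by positivity
      linarith
  -- main chain
  have hTsub : (∑ x ∈ Finset.Nat.antidiagonalTuple (k+1) n, u (xn x) * M x) - u q
      = ∑ x ∈ Finset.Nat.antidiagonalTuple (k+1) n, (u (xn x) - u q) * M x := by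
    rw [Finset.sum_congr rfl fun x _ => sub_mul (u (xn x)) (u q) (M x)]
    rw [Finset.sum_sub_distrib, ← Finset.mul_sum, hS, mul_one]
  rw [Real.dist_eq]
  calc |(∑ x ∈ Finset.Nat.antidiagonalTuple (k+1) n, u (xn x) * M x) - u q|
      = |∑ x ∈ Finset.Nat.antidiagonalTuple (k+1) n, (u (xn x) - u q) * M x| := by rw [hTsub]
    _ ≤ ∑ x ∈ Finset.Nat.antidiagonalTuple (k+1) n, |(u (xn x) - u q) * M x| :=
        Finset.abs_sum_le_sum_abs _ _
    _ ≤ ∑ x ∈ Finset.Nat.antidiagonalTuple (k+1) n,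
          (ε/2 * M x + B * (M x * ∑ i, (xn x i - q i)^2)) :=
        Finset.sum_le_sum hterm
    _ = ε/2 * (∑ x ∈ Finset.Nat.antidiagonalTuple (k+1) n, M x)
        + B * ∑ x ∈ Finset.Nat.antidiagonalTuple (k+1) n, M x * ∑ i, (xn x i - q i)^2 := by
        rw [Finset.sum_add_distrib, ← Finset.mul_sum, ← Finset.mul_sum]
    _ ≤ ε/2 + B * (1/n) := by
        rw [hS, mul_one]
        exact add_le_add (le_refl _) (mul_le_mul_of_nonneg_left hV hBnn)
    _ < ε := by
        have hN₀R : (0:ℝ) < N₀ := by exact_mod_cast hN₀pos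
        have hnN : (N₀:ℝ) ≤ n := by exact_mod_cast hn
        have h2 : B * (1/(n:ℝ)) ≤ B * (1/(N₀:ℝ)) :=
          mul_le_mul_of_nonneg_left (one_div_le_one_div_of_le hN₀R hnN) hBnn
        have h3 : B < (N₀:ℝ) * (ε/4) := by
          rw [div_lt_iff₀ (by linarith : (0:ℝ) < ε/4)] at hN₀
          linarith
        have h4 : B * (1/(N₀:ℝ)) < ε/4 := by
          rw [mul_one_div, div_lt_iff₀ hN₀R]
          nlinarith
        linarith

lemma DM.beta (b a : ℕ) :
    ∫ t in (0:ℝ)..1, t^a * (1-t)^b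
      = (a.factorial : ℝ) * (b.factorial : ℝ) / ((a+b+1).factorial : ℝ) := by
  induction b generalizing a with
  | zero =>
    simp only [pow_zero, mul_one, integral_pow]
    rw [show a + 0 + 1 = a + 1 by ring, Nat.factorial_succ]
    push_cast [Nat.factorial_succ]
    rw [one_pow, zero_pow (by omega), sub_zero]
    have : (a:ℝ) + 1 ≠ 0 := by positivity
    field_simp
    simp
  | succ b ih =>
    have hderiv : ∀ t ∈ Set.uIcc (0:ℝ) 1,
        HasDerivAt (fun t : ℝ => t^(a+1) * (1-t)^(b+1))
          (((a+1:ℕ):ℝ) * t^a * (1-t)^(b+1) - ((b+1:ℕ):ℝ) * (t^(a+1) * (1-t)^b)) t := by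
      intro t _
      have h1 : HasDerivAt (fun t : ℝ => 1 - t) (-1) t := by
        simpa using (hasDerivAt_id' t).const_sub (1:ℝ)
      have h2 := h1.fun_pow (b+1)
      have h3 := hasDerivAt_pow (a+1) t
      have := h3.fun_mul h2
      refine this.congr_deriv ?_
      push_cast
      ring
    have hcont : ∀ c d : ℕ, IntervalIntegrable (fun t : ℝ => t^c * (1-t)^d) volume 0 1 := by
      intro c d
      apply Continuous.intervalIntegrable
      continuity
    have hint : ∫ t in (0:ℝ)..1,
        (((a+1:ℕ):ℝ) * t^a * (1-t)^(b+1) - ((b+1:ℕ):ℝ) * (t^(a+1) * (1-t)^b)) = 0 := by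
      rw [intervalIntegral.integral_eq_sub_of_hasDerivAt hderiv]
      · norm_num
      · apply IntervalIntegrable.sub
        · have := (hcont a (b+1)).const_mul ((a+1:ℕ):ℝ)
          simpa [mul_assoc] using this
        · exact (hcont (a+1) b).const_mul _
    rw [intervalIntegral.integral_sub (by simpa [mul_assoc] using (hcont a (b+1)).const_mul ((a+1:ℕ):ℝ))
        ((hcont (a+1) b).const_mul _)] at hint
    have h4 : ∫ t in (0:ℝ)..1, ((a+1:ℕ):ℝ) * t^a * (1-t)^(b+1)
        = ((a+1:ℕ):ℝ) * ∫ t in (0:ℝ)..1, t^a * (1-t)^(b+1) := by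
      rw [← intervalIntegral.integral_const_mul]
      congr 1; funext t; ring
    have h5 : ∫ t in (0:ℝ)..1, ((b+1:ℕ):ℝ) * (t^(a+1) * (1-t)^b)
        = ((b+1:ℕ):ℝ) * ∫ t in (0:ℝ)..1, t^(a+1) * (1-t)^b := intervalIntegral.integral_const_mul _ _
    rw [h4, h5, ih (a+1)] at hint
    have ha1 : ((a:ℝ)+1) ≠ 0 := by positivity
    have hfac : ((a + (b+1) + 1).factorial : ℝ) ≠ 0 := by
      exact_mod_cast Nat.factorial_ne_zero _
    have hfac2 : (((a+1) + b + 1).factorial : ℝ) ≠ 0 := by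
      exact_mod_cast Nat.factorial_ne_zero _
    have hshape : (a+1) + b + 1 = a + (b+1) + 1 := by ring
    rw [hshape] at hint
    have : ∫ t in (0:ℝ)..1, t^a * (1-t)^(b+1)
        = ((b+1:ℕ):ℝ) * ((((a+1).factorial : ℝ)) * ((b.factorial : ℝ)) / (((a + (b+1) + 1).factorial : ℝ))) / ((a+1:ℕ):ℝ) := by
      field_simp at hint ⊢
      push_cast at hint ⊢
      linarith
    rw [this]
    push_cast [Nat.factorial_succ]
    field_simp

def DM.S (k : ℕ) : Set (Fin k → ℝ) := {y | (∀ i, 0 ≤ y i) ∧ ∑ i, y i ≤ 1}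

lemma DM.S_closed (k : ℕ) : IsClosed (DM.S k) := by
  have h : DM.S k = (⋂ i, {y : Fin k → ℝ | 0 ≤ y i}) ∩ {y : Fin k → ℝ | ∑ i, y i ≤ 1} := by
    ext y; simp [DM.S, Set.mem_iInter]
  rw [h]
  exact (isClosed_iInter fun i => isClosed_le continuous_const (continuous_apply i)).inter
    (isClosed_le (continuous_finset_sum _ fun i _ => continuous_apply i) continuous_const)

lemma DM.S_meas (k : ℕ) : MeasurableSet (DM.S k) := (DM.S_closed k).measurableSet

lemma DM.S_compact (k : ℕ) : IsCompact (DM.S k) := by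
  refine (isCompact_univ_pi fun _ : Fin k => isCompact_Icc (a := (0:ℝ)) (b := 1)).of_isClosed_subset
    (DM.S_closed k) ?_
  intro y hy
  rw [Set.mem_univ_pi]
  intro i
  refine ⟨hy.1 i, ?_⟩
  calc y i ≤ ∑ j, y j := Finset.single_le_sum (fun j _ => hy.1 j) (mem_univ i)
    _ ≤ 1 := hy.2

lemma DM.dirichlet_integral : ∀ (k : ℕ) (x : Fin (k+1) → ℕ),
    ∫ y in DM.S k, ∏ i, ((Fin.cons (1 - ∑ j, y j) y : Fin (k+1) → ℝ) i) ^ (x i)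
      = (∏ i, ((x i).factorial : ℝ)) / (((∑ i, x i) + k).factorial : ℝ) := by
  intro k
  induction k with
  | zero =>
    intro x
    have hS0 : DM.S 0 = Set.univ := by
      ext y; simp [DM.S]
    have hint : ∀ y : Fin 0 → ℝ, ∏ i, ((Fin.cons (1 - ∑ j, y j) y : Fin 1 → ℝ) i) ^ (x i) = 1 := by
      intro y
      rw [Fin.prod_univ_succ]
      simp
    rw [hS0, Measure.restrict_univ]
    simp only [hint]
    rw [integral_const]
    have hvol : (volume : Measure (Fin 0 → ℝ)) Set.univ = 1 := by
      rw [show (Set.univ : Set (Fin 0 → ℝ)) = Set.pi Set.univ (fun _ => Set.univ) by simp]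
      rw [MeasureTheory.volume_pi, MeasureTheory.Measure.pi_pi]
      simp
    rw [measureReal_def, hvol]
    rw [Fin.prod_univ_succ, Fin.sum_univ_succ]
    simp [Nat.factorial_ne_zero, div_self]
  | succ k ih =>
    intro x
    -- abbreviations
    set x' : Fin (k+1) → ℕ := Fin.cons (x 0) (fun j => x j.succ.succ) with hx'
    set N' : ℕ := ∑ i, x' i with hN'
    set CkR : ℝ := (∏ i, ((x' i).factorial : ℝ)) / ((N' + k).factorial : ℝ) with hCkR
    set F : (Fin (k+1) → ℝ) → ℝ := fun y =>
      (1 - ∑ j, y j)^(x 0) * ((y 0)^(x 1) * ∏ j : Fin k, (y j.succ)^(x j.succ.succ)) with hFdef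
    set H : (Fin k → ℝ) → ℝ := fun w =>
      (1 - ∑ j, w j)^(x 0) * ∏ j : Fin k, (w j)^(x j.succ.succ) with hHdef
    have hF : ∀ y : Fin (k+1) → ℝ, ∏ i, ((Fin.cons (1 - ∑ j, y j) y : Fin (k+2) → ℝ) i) ^ (x i) = F y := by
      intro y
      rw [Fin.prod_univ_succ, Fin.prod_univ_succ]
      simp [hFdef, Fin.cons_zero, Fin.cons_succ, Fin.succ_zero_eq_one]
    have hFcont : Continuous F := by
      apply Continuous.mul
      · exact (continuous_const.sub (continuous_finset_sum _ fun i _ => continuous_apply i)).pow _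
      · exact ((continuous_apply 0).pow _).mul
          (continuous_finset_prod _ fun j _ => (continuous_apply j.succ).pow _)
    have hHcont : Continuous H := by
      apply Continuous.mul
      · exact (continuous_const.sub (continuous_finset_sum _ fun i _ => continuous_apply i)).pow _
      · exact continuous_finset_prod _ fun j _ => (continuous_apply j).pow _
    have hIH : ∫ w, Set.indicator (DM.S k) H w = CkR := by
      rw [integral_indicator (DM.S_meas k)]
      have hHrw : ∀ w : Fin k → ℝ, H w = ∏ i, ((Fin.cons (1 - ∑ j, w j) w : Fin (k+1) → ℝ) i) ^ (x' i) := by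
        intro w
        rw [Fin.prod_univ_succ]
        simp [hHdef, hx', Fin.cons_zero, Fin.cons_succ]
      simp only [hHrw]
      exact ih x'
    -- change of variables to ℝ × (Fin k → ℝ)
    have hIntInd : Integrable (Set.indicator (DM.S (k+1)) F) volume :=
      ((hFcont.continuousOn).integrableOn_compact (DM.S_compact (k+1))).integrable_indicator
        (DM.S_meas (k+1))
    set e := MeasurableEquiv.piFinSuccAbove (fun _ : Fin (k+1) => ℝ) 0 with he_def
    have he : MeasurePreserving e.symm volume volume :=
      (volume_preserving_piFinSuccAbove (fun _ : Fin (k+1) => ℝ) 0).symm _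
    have hesymm : ∀ (t : ℝ) (z : Fin k → ℝ), e.symm (t, z) = Fin.cons t z := by
      intro t z
      show (Fin.insertNthEquiv (fun _ => ℝ) 0) (t, z) = Fin.cons t z
      simp [Fin.insertNthEquiv, Fin.insertNth_zero']
    have hIntProd : Integrable (fun p : ℝ × (Fin k → ℝ) => Set.indicator (DM.S (k+1)) F (e.symm p))
        (volume.prod volume) := by
      rw [← MeasureTheory.Measure.volume_eq_prod]
      exact (he.integrable_comp_emb e.symm.measurableEmbedding).mpr hIntInd
    have key : ∫ y in DM.S (k+1), F y
        = ∫ t : ℝ, ∫ z : Fin k → ℝ, Set.indicator (DM.S (k+1)) F (Fin.cons t z) := by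
      rw [← integral_indicator (DM.S_meas (k+1))]
      rw [← he.integral_comp' (Set.indicator (DM.S (k+1)) F)]
      rw [MeasureTheory.Measure.volume_eq_prod, integral_prod _ hIntProd]
      simp only [hesymm]
    -- membership description
    have hmem : ∀ (t : ℝ) (z : Fin k → ℝ),
        (Fin.cons t z ∈ DM.S (k+1)) ↔ (0 ≤ t ∧ (∀ j, 0 ≤ z j) ∧ t + ∑ j, z j ≤ 1) := by
      intro t z
      constructor
      · rintro ⟨h1, h2⟩
        rw [Fin.sum_univ_succ] at h2
        exact ⟨h1 0, fun j => by simpa using h1 j.succ, by simpa using h2⟩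
      · rintro ⟨h1, h2, h3⟩
        refine ⟨fun i => ?_, ?_⟩
        · refine Fin.cases ?_ ?_ i <;> simp [h1, h2]
        · rw [Fin.sum_univ_succ]; simpa using h3
    have hFcons : ∀ (t : ℝ) (z : Fin k → ℝ), F (Fin.cons t z)
        = (1 - (t + ∑ j, z j))^(x 0) * (t^(x 1) * ∏ j, (z j)^(x j.succ.succ)) := by
      intro t z
      simp only [hFdef, Fin.sum_univ_succ, Fin.cons_zero, Fin.cons_succ]
    have hN'sum : N' = x 0 + ∑ j : Fin k, x j.succ.succ := by
      rw [hN', Fin.sum_univ_succ]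
      simp [hx']
    -- inner integral evaluation
    set g : ℝ → ℝ := fun t => Set.indicator (Set.Icc (0:ℝ) 1)
        (fun s => s^(x 1) * (1-s)^(N' + k) * CkR) t with hgdef
    have hinner : ∀ t : ℝ, t ≠ 1 →
        (∫ z : Fin k → ℝ, Set.indicator (DM.S (k+1)) F (Fin.cons t z)) = g t := by
      intro t ht
      by_cases hmemt : 0 ≤ t ∧ t ≤ 1
      · obtain ⟨ht0, ht1⟩ := hmemt
        have htlt : t < 1 := lt_of_le_of_ne ht1 ht
        set c : ℝ := 1 - t with hc
        have hcpos : 0 < c := by rw [hc]; linarith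
        have hcne : c ≠ 0 := ne_of_gt hcpos
        have hiff : ∀ z : Fin k → ℝ, (Fin.cons t z ∈ DM.S (k+1)) ↔ (c⁻¹ • z ∈ DM.S k) := by
          intro z
          rw [hmem]
          have hsmul : ∑ j, (c⁻¹ • z) j = c⁻¹ * ∑ j, z j := by
            simp [Finset.mul_sum]
          constructor
          · rintro ⟨h1, h2, h3⟩
            refine ⟨fun j => mul_nonneg (inv_nonneg.mpr hcpos.le) (h2 j), ?_⟩
            rw [hsmul, inv_mul_eq_div, div_le_one hcpos]
            rw [hc]; linarith
          · rintro ⟨h1, h2⟩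
            have hznn : ∀ j, 0 ≤ z j := by
              intro j
              have h := h1 j
              have : (c⁻¹ • z) j = c⁻¹ * z j := rfl
              rw [this] at h
              nlinarith [inv_pos.mpr hcpos]
            rw [hsmul, inv_mul_eq_div, div_le_one hcpos] at h2
            exact ⟨ht0, hznn, by rw [hc] at h2; linarith⟩
        have hval : ∀ z : Fin k → ℝ, c⁻¹ • z ∈ DM.S k →
            F (Fin.cons t z) = t^(x 1) * c^(N' : ℕ) * H (c⁻¹ • z) := by
          intro z _
          rw [hFcons]
          have hsmul : ∑ j, (c⁻¹ • z) j = c⁻¹ * ∑ j, z j := by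
            simp [Finset.mul_sum]
          have hHv : H (c⁻¹ • z) = (1 - c⁻¹ * ∑ j, z j)^(x 0) * ∏ j, (c⁻¹ * z j)^(x j.succ.succ) := by
            simp only [hHdef, hsmul]
            rfl
          rw [hHv]
          have h1 : 1 - (t + ∑ j, z j) = c * (1 - c⁻¹ * ∑ j, z j) := by
            rw [mul_sub, mul_inv_cancel_left₀ hcne, mul_one, hc]; ring
          have h2 : ∀ j : Fin k, (z j) = c * (c⁻¹ * z j) := fun j =>
            (mul_inv_cancel_left₀ hcne (z j)).symm
          have h3 : ∏ j, (z j)^(x j.succ.succ)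
              = c^(∑ j : Fin k, x j.succ.succ) * ∏ j, (c⁻¹ * z j)^(x j.succ.succ) := by
            calc ∏ j : Fin k, (z j)^(x j.succ.succ)
                = ∏ j : Fin k, (c * (c⁻¹ * z j))^(x j.succ.succ) := by
                  exact Finset.prod_congr rfl fun j _ => by rw [← h2 j]
              _ = ∏ j : Fin k, (c^(x j.succ.succ) * (c⁻¹ * z j)^(x j.succ.succ)) := by
                  exact Finset.prod_congr rfl fun j _ => mul_pow _ _ _
              _ = (∏ j : Fin k, c^(x j.succ.succ)) * ∏ j : Fin k, (c⁻¹ * z j)^(x j.succ.succ) :=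
                  Finset.prod_mul_distrib
              _ = c^(∑ j : Fin k, x j.succ.succ) * ∏ j, (c⁻¹ * z j)^(x j.succ.succ) := by
                  rw [Finset.prod_pow_eq_pow_sum]
          rw [h1, mul_pow, h3, hN'sum, pow_add]
          ring
        have hrw : ∀ z : Fin k → ℝ, Set.indicator (DM.S (k+1)) F (Fin.cons t z)
            = t^(x 1) * c^(N' : ℕ) * Set.indicator (DM.S k) H (c⁻¹ • z) := by
          intro z
          by_cases hz : c⁻¹ • z ∈ DM.S k
          · rw [Set.indicator_of_mem ((hiff z).mpr hz), Set.indicator_of_mem hz, hval z hz]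
          · rw [Set.indicator_of_notMem (fun hc' => hz ((hiff z).mp hc')),
              Set.indicator_of_notMem hz, mul_zero]
        calc ∫ z : Fin k → ℝ, Set.indicator (DM.S (k+1)) F (Fin.cons t z)
            = ∫ z : Fin k → ℝ, t^(x 1) * c^(N' : ℕ) * Set.indicator (DM.S k) H (c⁻¹ • z) := by
              simp only [hrw]
          _ = t^(x 1) * c^(N' : ℕ) * ∫ z : Fin k → ℝ, Set.indicator (DM.S k) H (c⁻¹ • z) := by
              rw [MeasureTheory.integral_const_mul]
          _ = t^(x 1) * c^(N' : ℕ) * (c^k * CkR) := by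
              rw [MeasureTheory.Measure.integral_comp_smul volume (Set.indicator (DM.S k) H) c⁻¹]
              rw [hIH]
              congr 2
              rw [Module.finrank_pi, Fintype.card_fin, inv_pow, inv_inv,
                abs_of_pos (pow_pos hcpos k)]
          _ = g t := by
              simp only [hgdef]
              rw [Set.indicator_of_mem (Set.mem_Icc.mpr ⟨ht0, ht1⟩)]
              rw [show (1 : ℝ) - t = c from rfl, pow_add]
              ring
      · have hzero : ∀ z : Fin k → ℝ, Set.indicator (DM.S (k+1)) F (Fin.cons t z) = 0 := by
          intro z
          apply Set.indicator_of_notMem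
          intro hcmem
          obtain ⟨h1, h2, h3⟩ := (hmem t z).mp hcmem
          apply hmemt
          have : 0 ≤ ∑ j, z j := Finset.sum_nonneg fun j _ => h2 j
          exact ⟨h1, by linarith⟩
        simp only [hzero]
        rw [integral_zero]
        simp only [hgdef]
        rw [Set.indicator_of_notMem (by rw [Set.mem_Icc]; exact hmemt)]
    -- outer integral
    have houter : (∫ t : ℝ, ∫ z : Fin k → ℝ, Set.indicator (DM.S (k+1)) F (Fin.cons t z))
        = ∫ t : ℝ, g t := by
      apply integral_congr_ae
      have hsing : (volume : Measure ℝ) {(1:ℝ)} = 0 := Real.volume_singleton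
      have hae : ∀ᵐ t : ℝ, t ≠ 1 := by
        rw [MeasureTheory.ae_iff]
        convert hsing using 2
        ext t
        simp
      filter_upwards [hae] with t ht
      exact hinner t ht
    have hgint : (∫ t : ℝ, g t) = ((x 1).factorial : ℝ) * (((N'+k)).factorial : ℝ)
        / (((x 1) + (N'+k) + 1).factorial : ℝ) * CkR := by
      rw [hgdef, integral_indicator measurableSet_Icc, integral_Icc_eq_integral_Ioc,
        ← intervalIntegral.integral_of_le zero_le_one, intervalIntegral.integral_mul_const,
        DM.beta (N'+k) (x 1)]
    -- assembly
    simp only [hF]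
    rw [key, houter, hgint, hCkR]
    have hprodx : ∏ i : Fin (k+2), ((x i).factorial : ℝ)
        = ((x 0).factorial : ℝ) * ((x 1).factorial : ℝ) * ∏ j : Fin k, ((x j.succ.succ).factorial : ℝ) := by
      rw [Fin.prod_univ_succ, Fin.prod_univ_succ]
      simp [Fin.succ_zero_eq_one, mul_assoc]
    have hprodx' : ∏ i : Fin (k+1), ((x' i).factorial : ℝ)
        = ((x 0).factorial : ℝ) * ∏ j : Fin k, ((x j.succ.succ).factorial : ℝ) := by
      rw [Fin.prod_univ_succ]
      simp [hx']
    have hsumx : ∑ i : Fin (k+2), x i = x 1 + N' := by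
      rw [Fin.sum_univ_succ, Fin.sum_univ_succ, hN'sum]
      simp [Fin.succ_zero_eq_one]
      ring
    rw [hprodx, hprodx', hsumx]
    have hd1 : (((x 1) + (N'+k) + 1).factorial : ℝ) ≠ 0 := by
      exact_mod_cast Nat.factorial_ne_zero _
    have hd2 : (((N'+k)).factorial : ℝ) ≠ 0 := by
      exact_mod_cast Nat.factorial_ne_zero _
    have hd3 : ((x 1 + N' + (k+1)).factorial : ℝ) ≠ 0 := by
      exact_mod_cast Nat.factorial_ne_zero _
    have hshape : x 1 + N' + (k+1) = x 1 + (N'+k) + 1 := by ring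
    rw [hshape]
    field_simp

lemma DM.cont_prod (k : ℕ) (x : Fin (k+1) → ℕ) :
    Continuous (fun y : Fin k → ℝ =>
      ∏ i, ((Fin.cons (1 - ∑ j, y j) y : Fin (k+1) → ℝ) i) ^ (x i)) := by
  apply continuous_finset_prod
  intro i _
  refine Fin.cases ?_ ?_ i
  · simp only [Fin.cons_zero]
    exact (continuous_const.sub (continuous_finset_sum _ fun j _ => continuous_apply j)).pow _
  · intro j
    simp only [Fin.cons_succ]
    exact (continuous_apply j).pow _

-- dirichletPDF rewrite

lemma DM.dirichlet_eq (k n : ℕ) (x : Fin (k+1) → ℕ) (hx : ∑ i, x i = n) (p : Fin (k+1) → ℝ) :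
    dirichletPDF (fun i => (x i : ℝ) + 1) p
      = (((n+k).factorial : ℝ) / (n.factorial : ℝ))
        * ((Nat.multinomial univ x : ℝ) * ∏ i, p i ^ x i) := by
  unfold dirichletPDF
  have h1 : ∑ i, ((x i : ℝ) + 1) = ((n + k : ℕ) : ℝ) + 1 := by
    rw [Finset.sum_add_distrib]
    rw [show ∑ i : Fin (k+1), ((x i : ℕ) : ℝ) = ((∑ i, x i : ℕ) : ℝ) by push_cast; rfl, hx]
    rw [Finset.sum_const, Finset.card_univ, Fintype.card_fin, nsmul_eq_mul, mul_one]
    push_cast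
    ring
  have h2 : Real.Gamma (∑ i, ((x i : ℝ) + 1)) = ((n+k).factorial : ℝ) := by
    rw [h1, Real.Gamma_nat_eq_factorial]
  have h3 : ∏ i, Real.Gamma ((x i : ℝ) + 1) = ∏ i, ((x i).factorial : ℝ) :=
    Finset.prod_congr rfl fun i _ => Real.Gamma_nat_eq_factorial (x i)
  have h4 : ∏ i, p i ^ ((x i : ℝ) + 1 - 1) = ∏ i, p i ^ (x i : ℕ) := by
    refine Finset.prod_congr rfl fun i _ => ?_
    rw [add_sub_cancel_right]
    exact Real.rpow_natCast _ _
  have h5 : (∏ i, ((x i).factorial : ℝ)) * (Nat.multinomial univ x : ℝ) = (n.factorial : ℝ) := by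
    rw [← hx]
    exact_mod_cast congrArg (fun t : ℕ => (t : ℝ)) (Nat.multinomial_spec univ x)
  have hprodne : (∏ i, ((x i).factorial : ℝ)) ≠ 0 := by
    apply Finset.prod_ne_zero_iff.mpr
    intro i _
    exact_mod_cast Nat.factorial_ne_zero (x i)
  have hnne : (n.factorial : ℝ) ≠ 0 := by exact_mod_cast Nat.factorial_ne_zero n
  show Real.Gamma (∑ i, ((x i : ℝ) + 1)) / (∏ i, Real.Gamma ((x i : ℝ) + 1))
      * ∏ i, p i ^ ((x i : ℝ) + 1 - 1) = _
  rw [h2, h3, h4]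
  rw [div_mul_eq_mul_div, div_eq_iff hprodne]
  have : (Nat.multinomial univ x : ℝ) = (n.factorial : ℝ) / (∏ i, ((x i).factorial : ℝ)) := by
    rw [eq_div_iff hprodne]
    linarith [h5]
  rw [this]
  field_simp

/-- **Dirichlet-mixture approximation of a continuous prior density.**
Let `u` be a continuous, bounded, nonnegative prior density on the simplex
`Δ^{m-1}` (`m = k + 1`), normalized so that it integrates to `1` over the
simplex (parametrized by its last `k` coordinates). With nonnegative weights
`b_{x,n} = u(x/n) / ∑_y u(y/n)` (summing to `1`, proportional to `u(x/n)`),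
the finite Dirichlet mixtures
`∑_{x : ∑ x i = n} b_{x,n} · D(p | x₁+1, …, x_m+1)` converge pointwise to
`u(p)` on the simplex as `n → ∞`. -/
theorem dirichlet_mixture_approximation
    (k : ℕ) (u : (Fin (k + 1) → ℝ) → ℝ)
    (hu : ContinuousOn u (stdSimplex ℝ (Fin (k + 1))))
    (hb : ∃ C : ℝ, ∀ p ∈ stdSimplex ℝ (Fin (k + 1)), |u p| ≤ C)
    (hnonneg : ∀ p ∈ stdSimplex ℝ (Fin (k + 1)), 0 ≤ u p)
    (hnorm : ∫ y in {y : Fin k → ℝ | (∀ i, 0 ≤ y i) ∧ ∑ i, y i ≤ 1},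
        u (Fin.cons (1 - ∑ i, y i) y) = 1)
    (p : Fin (k + 1) → ℝ) (hp : p ∈ stdSimplex ℝ (Fin (k + 1))) :
    Filter.Tendsto
      (fun n : ℕ => ∑ x ∈ Finset.Nat.antidiagonalTuple (k + 1) n,
        (u (fun i => (x i : ℝ) / n) /
            ∑ y ∈ Finset.Nat.antidiagonalTuple (k + 1) n,
              u (fun i => (y i : ℝ) / n)) *
          dirichletPDF (fun i => (x i : ℝ) + 1) p)
      Filter.atTop (nhds (u p)) := by
  classical
  obtain ⟨C, hC⟩ := hb
  set T : ℕ → (Fin (k+1) → ℝ) → ℝ := fun n q =>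
    ∑ x ∈ Finset.Nat.antidiagonalTuple (k+1) n,
      u (fun i => (x i : ℝ)/n) * ((Nat.multinomial univ x : ℝ) * ∏ i, q i ^ x i) with hT
  set Sn : ℕ → ℝ := fun n => ∑ y ∈ Finset.Nat.antidiagonalTuple (k+1) n,
      u (fun i => (y i : ℝ)/n) with hSn
  set cn : ℕ → ℝ := fun n => ((n+k).factorial : ℝ) / (n.factorial : ℝ) with hcn
  set J : ℕ → ℝ := fun n => ∫ y in DM.S k, T n (Fin.cons (1 - ∑ j, y j) y) with hJdef
  have hcnpos : ∀ n, 0 < cn n := by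
    intro n
    apply _root_.div_pos <;> exact_mod_cast Nat.factorial_pos _
  have hparam_mem : ∀ y ∈ DM.S k, (Fin.cons (1 - ∑ j, y j) y : Fin (k+1) → ℝ) ∈ stdSimplex ℝ (Fin (k+1)) := by
    intro y hy
    obtain ⟨hy0, hy1⟩ := hy
    constructor
    · intro i
      refine Fin.cases ?_ ?_ i
      · rw [Fin.cons_zero]; linarith
      · intro j; rw [Fin.cons_succ]; exact hy0 j
    · rw [Fin.sum_univ_succ]
      simp only [Fin.cons_zero, Fin.cons_succ]
      ring
  -- (A) J n = Sn n * (n! / (n+k)!)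
  have hA : ∀ n, J n = Sn n * ((n.factorial : ℝ) / ((n+k).factorial : ℝ)) := by
    intro n
    rw [hJdef]
    have hint : ∀ x : Fin (k+1) → ℕ, IntegrableOn
        (fun y : Fin k → ℝ => u (fun i => (x i : ℝ)/n) *
          ((Nat.multinomial univ x : ℝ) * ∏ i, ((Fin.cons (1 - ∑ j, y j) y : Fin (k+1) → ℝ) i) ^ (x i)))
        (DM.S k) volume := by
      intro x
      apply ContinuousOn.integrableOn_compact (DM.S_compact k)
      exact ((continuous_const.mul (continuous_const.mul (DM.cont_prod k x))).continuousOn)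
    calc ∫ y in DM.S k, T n (Fin.cons (1 - ∑ j, y j) y)
        = ∑ x ∈ Finset.Nat.antidiagonalTuple (k+1) n,
            ∫ y in DM.S k, u (fun i => (x i : ℝ)/n) *
              ((Nat.multinomial univ x : ℝ) * ∏ i, ((Fin.cons (1 - ∑ j, y j) y : Fin (k+1) → ℝ) i) ^ (x i)) := by
          rw [hT]
          exact integral_finset_sum _ fun x _ => hint x
      _ = ∑ x ∈ Finset.Nat.antidiagonalTuple (k+1) n,
            u (fun i => (x i : ℝ)/n) * ((n.factorial : ℝ) / ((n+k).factorial : ℝ)) := by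
          refine Finset.sum_congr rfl fun x hx => ?_
          rw [Finset.Nat.mem_antidiagonalTuple] at hx
          rw [MeasureTheory.integral_const_mul, MeasureTheory.integral_const_mul,
            DM.dirichlet_integral k x, hx]
          have h5 : (Nat.multinomial univ x : ℝ) * (∏ i, ((x i).factorial : ℝ)) = (n.factorial : ℝ) := by
            rw [← hx, mul_comm]
            exact_mod_cast congrArg (fun t : ℕ => (t : ℝ)) (Nat.multinomial_spec univ x)
          congr 1
          rw [mul_div_assoc', h5]
      _ = Sn n * ((n.factorial : ℝ) / ((n+k).factorial : ℝ)) := by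
          rw [hSn, Finset.sum_mul]
  -- (B) J → 1 by dominated convergence (shifted by one)
  have hJ : Filter.Tendsto J Filter.atTop (nhds 1) := by
    rw [← Filter.tendsto_add_atTop_iff_nat 1]
    have hDCT : Filter.Tendsto (fun n : ℕ => ∫ y in DM.S k, T (n+1) (Fin.cons (1 - ∑ j, y j) y))
        Filter.atTop (nhds (∫ y in DM.S k, u (Fin.cons (1 - ∑ j, y j) y))) := by
      apply MeasureTheory.tendsto_integral_of_dominated_convergence (fun _ => |C|)
      · intro n
        apply Continuous.aestronglyMeasurable
        apply continuous_finset_sum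
        intro x _
        exact continuous_const.mul (continuous_const.mul (DM.cont_prod k x))
      · exact integrableOn_const (DM.S_compact k).measure_lt_top.ne
      · intro n
        rw [MeasureTheory.ae_restrict_iff' (DM.S_meas k)]
        apply Filter.Eventually.of_forall
        intro y hy
        have hmem := hparam_mem y hy
        obtain ⟨hq0, hq1⟩ := hmem
        set q : Fin (k+1) → ℝ := Fin.cons (1 - ∑ j, y j) y with hq
        have hM0 : ∀ x : Fin (k+1) → ℕ, 0 ≤ (Nat.multinomial univ x : ℝ) * ∏ i, q i ^ x i := by
          intro x
          have : 0 ≤ ∏ i, q i ^ x i := Finset.prod_nonneg fun i _ => pow_nonneg (hq0 i) _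
          positivity
        have hSum1 : ∑ x ∈ Finset.Nat.antidiagonalTuple (k+1) (n+1),
            (Nat.multinomial univ x : ℝ) * ∏ i, q i ^ x i = 1 := DM.sum_M (k+1) (n+1) q hq1
        have hxmem : ∀ x ∈ Finset.Nat.antidiagonalTuple (k+1) (n+1),
            (fun i => (x i : ℝ)/(n+1 : ℕ)) ∈ stdSimplex ℝ (Fin (k+1)) := by
          intro x hx
          rw [Finset.Nat.mem_antidiagonalTuple] at hx
          constructor
          · intro i
            positivity
          · rw [← Finset.sum_div]
            rw [show ∑ i, ((x i : ℕ) : ℝ) = ((∑ i, x i : ℕ) : ℝ) by push_cast; rfl, hx]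
            rw [div_self]
            positivity
        calc ‖T (n+1) q‖
            ≤ ∑ x ∈ Finset.Nat.antidiagonalTuple (k+1) (n+1),
              ‖u (fun i => (x i : ℝ)/(n+1 : ℕ)) * ((Nat.multinomial univ x : ℝ) * ∏ i, q i ^ x i)‖ := by
              exact norm_sum_le _ _
          _ ≤ ∑ x ∈ Finset.Nat.antidiagonalTuple (k+1) (n+1),
              |C| * ((Nat.multinomial univ x : ℝ) * ∏ i, q i ^ x i) := by
              refine Finset.sum_le_sum fun x hx => ?_
              rw [norm_mul, Real.norm_eq_abs, Real.norm_eq_abs, abs_of_nonneg (hM0 x)]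
              apply mul_le_mul_of_nonneg_right _ (hM0 x)
              exact le_trans (hC _ (hxmem x hx)) (le_abs_self C)
          _ = |C| := by rw [← Finset.mul_sum, hSum1, mul_one]
      · rw [MeasureTheory.ae_restrict_iff' (DM.S_meas k)]
        apply Filter.Eventually.of_forall
        intro y hy
        exact (DM.bernstein k u hu C hC _ (hparam_mem y hy)).comp
          (Filter.tendsto_add_atTop_nat 1)
    have hnorm' : ∫ y in DM.S k, u (Fin.cons (1 - ∑ j, y j) y) = 1 := hnorm
    rw [hnorm'] at hDCT
    exact hDCT
  -- (C) Bernstein at p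
  have hTp : Filter.Tendsto (fun n => T n p) Filter.atTop (nhds (u p)) :=
    DM.bernstein k u hu C hC p hp
  -- (D) identity : mixture n = T n p / J n
  have hmix : ∀ n : ℕ,
      (∑ x ∈ Finset.Nat.antidiagonalTuple (k + 1) n,
        (u (fun i => (x i : ℝ) / n) /
            ∑ y ∈ Finset.Nat.antidiagonalTuple (k + 1) n,
              u (fun i => (y i : ℝ) / n)) *
          dirichletPDF (fun i => (x i : ℝ) + 1) p)
      = T n p / J n := by
    intro n
    have hstep : ∀ x ∈ Finset.Nat.antidiagonalTuple (k + 1) n,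
        (u (fun i => (x i : ℝ) / n) / Sn n) * dirichletPDF (fun i => (x i : ℝ) + 1) p
        = (cn n / Sn n) * (u (fun i => (x i : ℝ)/n) * ((Nat.multinomial univ x : ℝ) * ∏ i, p i ^ x i)) := by
      intro x hx
      rw [Finset.Nat.mem_antidiagonalTuple] at hx
      rw [DM.dirichlet_eq k n x hx p]
      rw [hcn]
      ring
    calc ∑ x ∈ Finset.Nat.antidiagonalTuple (k + 1) n,
        (u (fun i => (x i : ℝ) / n) / Sn n) * dirichletPDF (fun i => (x i : ℝ) + 1) p
        = ∑ x ∈ Finset.Nat.antidiagonalTuple (k + 1) n,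
          (cn n / Sn n) * (u (fun i => (x i : ℝ)/n) * ((Nat.multinomial univ x : ℝ) * ∏ i, p i ^ x i)) :=
          Finset.sum_congr rfl hstep
      _ = (cn n / Sn n) * T n p := by rw [← Finset.mul_sum, hT]
      _ = T n p / J n := by
          rw [hA n,
            show (n.factorial : ℝ)/((n+k).factorial : ℝ) = (cn n)⁻¹ from by rw [hcn, inv_div],
            ← div_eq_mul_inv, div_div_eq_mul_div]
          ring
  apply Filter.Tendsto.congr (fun n => (hmix n).symm)
  have := hTp.div hJ one_ne_zero
  rw [div_one] at this
  exact this
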